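/- Let A, B be d×d real positive definite matrices with A ⪰ B (i.e., A − B positive semidefinite). Then for any x ∈ ℝ^d, ‖x‖_A ≤ ‖x‖_B · √(det(A)/det(B)), where ‖x‖_M = √(xᵀ M x). -/

import Mathlib

open Matrix

lemma key_quad {d : ℕ} (C : Matrix (Fin d) (Fin d) ℝ) (hH : C.IsHermitian)
    (h1 : (C - 1).PosSemidef) (y : Fin d → ℝ) :
    y ⬝ᵥ C.mulVec y ≤ (y ⬝ᵥ y) * C.det := by
  set μ := hH.eigenvalues with hμ
  have hone : ∀ i, 1 ≤ μ i := by
    intro i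
    have hv := hH.mulVec_eigenvectorBasis i
    set v : Fin d → ℝ := ⇑(hH.eigenvectorBasis i) with hvdef
    have hvv : v ⬝ᵥ v = 1 := by
      have hn := hH.eigenvectorBasis.orthonormal.1 i
      have h2 : (inner ℝ (hH.eigenvectorBasis i) (hH.eigenvectorBasis i) : ℝ) = 1 := by
        rw [real_inner_self_eq_norm_sq, hn]; norm_num
      rw [EuclideanSpace.inner_eq_star_dotProduct] at h2
      simpa only [star_trivial] using h2
    have h0 := h1.dotProduct_mulVec_nonneg v
    rw [sub_mulVec, one_mulVec, hv] at h0
    simp only [star_trivial, dotProduct_sub, dotProduct_smul, smul_eq_mul, hvv, mul_one] at h0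
    linarith
  have hdet : C.det = ∏ i, μ i := by
    have := hH.det_eq_prod_eigenvalues
    simpa using this
  have hpsd : (C.det • (1 : Matrix (Fin d) (Fin d) ℝ) - C).PosSemidef := by
    have hspec := hH.spectral_theorem
    rw [Unitary.conjStarAlgAut_apply] at hspec
    set U : Matrix (Fin d) (Fin d) ℝ := (hH.eigenvectorUnitary : Matrix (Fin d) (Fin d) ℝ) with hU
    have hUU : U * star U = 1 := (Matrix.mem_unitaryGroup_iff).mp hH.eigenvectorUnitary.2
    have hDrw : C.det • (1 : Matrix (Fin d) (Fin d) ℝ) - C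
        = U * diagonal (fun i => C.det - μ i) * star U := by
      have h1' : C.det • (1 : Matrix (Fin d) (Fin d) ℝ) = U * (C.det • 1) * star U := by
        rw [mul_smul_comm, smul_mul_assoc, mul_one, hUU]
      calc C.det • (1 : Matrix (Fin d) (Fin d) ℝ) - C
          = U * (C.det • 1) * star U - U * diagonal (RCLike.ofReal ∘ μ) * star U := by
            rw [← h1', ← hspec]
        _ = U * (C.det • 1 - diagonal (RCLike.ofReal ∘ μ)) * star U := by
            rw [Matrix.mul_sub, Matrix.sub_mul]
        _ = U * diagonal (fun i => C.det - μ i) * star U := by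
            congr 2
            ext i j
            by_cases h : i = j <;>
              simp [Matrix.diagonal_apply, Matrix.one_apply, Matrix.smul_apply, h]
    rw [hDrw]
    have hdiag : (diagonal (fun i => C.det - μ i)).PosSemidef := by
      apply Matrix.PosSemidef.diagonal
      intro i
      simp only [Pi.zero_apply, sub_nonneg]
      rw [hdet]
      have h2 : (1:ℝ) ≤ ∏ j ∈ Finset.univ.erase i, μ j := by
        calc (1:ℝ) = ∏ _j ∈ Finset.univ.erase i, (1:ℝ) := by simp
          _ ≤ ∏ j ∈ Finset.univ.erase i, μ j :=
              Finset.prod_le_prod (by simp) (fun j _ => hone j)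
      rw [← Finset.mul_prod_erase Finset.univ μ (Finset.mem_univ i)]
      nlinarith [hone i]
    have := hdiag.mul_mul_conjTranspose_same U
    simpa [star_eq_conjTranspose] using this
  have h0 := hpsd.dotProduct_mulVec_nonneg y
  rw [sub_mulVec, smul_mulVec, one_mulVec] at h0
  simp only [star_trivial, dotProduct_sub, dotProduct_smul, smul_eq_mul] at h0
  linarith [h0]

theorem norm_comparison_det {d : ℕ} (A B : Matrix (Fin d) (Fin d) ℝ)
    (hA : A.PosDef) (hB : B.PosDef) (hAB : (A - B).PosSemidef) (x : Fin d → ℝ) :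
    Real.sqrt (x ⬝ᵥ A.mulVec x)
      ≤ Real.sqrt (x ⬝ᵥ B.mulVec x) * Real.sqrt (A.det / B.det) := by
  set S : Matrix (Fin d) (Fin d) ℝ := (open scoped MatrixOrder in CFC.sqrt B) with hS
  have hSpsd : S.PosSemidef := by open scoped MatrixOrder in exact (CFC.sqrt_nonneg B).posSemidef
  have hSH : S.IsHermitian := hSpsd.1
  have hSS : S * S = B := by
    open scoped MatrixOrder in exact CFC.sqrt_mul_sqrt_self B hB.posSemidef.nonneg
  have hdetS : S.det * S.det = B.det := by rw [← det_mul, hSS]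
  have hBdet : 0 < B.det := hB.det_pos
  have hSdet : S.det ≠ 0 := by
    intro h; rw [h, mul_zero] at hdetS; exact hBdet.ne' hdetS.symm
  have hSunit : IsUnit S.det := isUnit_iff_ne_zero.mpr hSdet
  have hSinv : S⁻¹ * S = 1 := nonsing_inv_mul S hSunit
  have hSinv' : S * S⁻¹ = 1 := mul_nonsing_inv S hSunit
  have hSiH : S⁻¹.IsHermitian := hSH.inv
  set C : Matrix (Fin d) (Fin d) ℝ := S⁻¹ * A * S⁻¹ with hC
  have hCH : C.IsHermitian := by
    have := isHermitian_conjTranspose_mul_mul S⁻¹ hA.isHermitian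
    rwa [hSiH.eq] at this
  have hC1 : (C - 1).PosSemidef := by
    have key : C - 1 = S⁻¹ᴴ * (A - B) * S⁻¹ := by
      rw [hSiH.eq, Matrix.mul_sub, Matrix.sub_mul, hC]
      congr 1
      symm
      calc S⁻¹ * B * S⁻¹ = S⁻¹ * (S * S) * S⁻¹ := by rw [hSS]
        _ = (S⁻¹ * S) * (S * S⁻¹) := by rw [Matrix.mul_assoc, Matrix.mul_assoc, Matrix.mul_assoc]
        _ = 1 := by rw [hSinv, hSinv', mul_one]
    rw [key]
    exact hAB.conjTranspose_mul_mul_same S⁻¹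
  set y : Fin d → ℝ := S.mulVec x with hy
  have hSCS : S * C * S = A := by
    rw [hC]
    calc S * (S⁻¹ * A * S⁻¹) * S = (S * S⁻¹) * A * (S⁻¹ * S) := by
          simp only [Matrix.mul_assoc]
      _ = A := by rw [hSinv, hSinv']; simp
  have hST : Sᵀ = S := hSH
  have hxA : x ⬝ᵥ A.mulVec x = y ⬝ᵥ C.mulVec y := by
    rw [← hSCS, hy]
    rw [show (S * C * S).mulVec x = S.mulVec (C.mulVec (S.mulVec x)) by
      simp [mulVec_mulVec, Matrix.mul_assoc]]
    rw [dotProduct_mulVec x S, ← mulVec_transpose, hST, dotProduct_mulVec]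
  have hxB : x ⬝ᵥ B.mulVec x = y ⬝ᵥ y := by
    rw [← hSS, hy]
    rw [show (S * S).mulVec x = S.mulVec (S.mulVec x) by simp [mulVec_mulVec]]
    rw [dotProduct_mulVec x S, ← mulVec_transpose]
    rw [hST]
  have hdetC : C.det = A.det / B.det := by
    rw [hC, det_mul, det_mul, det_nonsing_inv, Ring.inverse_eq_inv', ← hdetS]
    field_simp
  have hkey := key_quad C hCH hC1 y
  have hynn : 0 ≤ y ⬝ᵥ y := by
    have := Finset.sum_nonneg (fun i (_ : i ∈ Finset.univ) => mul_self_nonneg (y i))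
    simpa [dotProduct] using this
  rw [hxA, hxB, ← hdetC, ← Real.sqrt_mul hynn]
  exact Real.sqrt_le_sqrt hkey
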